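/- arXiv:1211.6266 — 4 statements merged into one kernel-verified Lean document; each statement's English description precedes it below -/
import Mathlib

section
/- Let H be a separable real Hilbert space and Y an H-valued Lévy process admitting a continuous Lévy exponent ρ : H → ℂ (E[exp(i⟨u, Y(t)⟩)] = exp(t·ρ(u)) for all t, u). Assume Y is symmetric (Y(t) and −Y(t) have the same law for every t), strictly α-stable for some α > 0 (Y(t^α) and t·Y(1) have the same law for every t ≥ 0), and nontrivial (P(Y(t) ≠ 0) > 0 for some t). Then α ∈ (0, 2], and there is a continuous function f : S_H → ℝ_+ on the unit sphere S_H := {x ∈ H : ‖x‖ = 1}, symmetric in the sense f(−v) = f(v), such that ρ(u) = −‖u‖^α · f(u/‖u‖) for every u ∈ H \ {0}; in particular ρ is real-valued, nonpositive, and satisfies ρ(t·u) = t^α·ρ(u) for all t ≥ 0 and u ∈ H. -/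
open MeasureTheory ProbabilityTheory Filter Set
open scoped RealInnerProductSpace ENNReal NNReal

noncomputable section

/-- A function `f : ℝ → E` is càdlàg on `[0,∞)`: right-continuous with left limits. -/
def CadlagOn {E : Type*} [TopologicalSpace E] (f : ℝ → E) : Prop :=
  (∀ t : ℝ, 0 ≤ t → ContinuousWithinAt f (Set.Ici t) t) ∧
  (∀ t : ℝ, 0 < t → ∃ x : E, Filter.Tendsto f (nhdsWithin t (Set.Iio t)) (nhds x))

/-- A process has independent increments. -/
def HasIndepIncrements {Ω E : Type*} [MeasurableSpace Ω] [MeasurableSpace E] [Sub E]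
    (P : Measure Ω) (L : ℝ → Ω → E) : Prop :=
  ∀ (n : ℕ) (t : Fin (n + 1) → ℝ), (∀ i, 0 ≤ t i) → Monotone t →
    iIndepFun
      (fun (i : Fin n) => fun ω => L (t i.succ) ω - L (t i.castSucc) ω) P

/-- A process has stationary increments. -/
def HasStatIncrements {Ω E : Type*} [MeasurableSpace Ω] [MeasurableSpace E] [Sub E]
    (P : Measure Ω) (L : ℝ → Ω → E) : Prop :=
  ∀ s t : ℝ, 0 ≤ s → 0 ≤ t →
    Measure.map (fun ω => L (s + t) ω - L s ω) P = Measure.map (L t) P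

/-- A process is continuous in probability (stochastically continuous) on `[0,∞)`. -/
def ContinuousInProbability {Ω E : Type*} [MeasurableSpace Ω] [PseudoMetricSpace E]
    (P : Measure Ω) (L : ℝ → Ω → E) : Prop :=
  ∀ t : ℝ, 0 ≤ t → ∀ ε : ℝ, 0 < ε →
    Filter.Tendsto (fun s => P {ω | ε < dist (L s ω) (L t ω)})
      (nhdsWithin t (Set.Ici 0)) (nhds 0)

/-- An `E`-valued Lévy process: measurable, starts at `0` a.s., càdlàg paths,
independent and stationary increments, continuous in probability. -/
def IsLevyProcess {Ω E : Type*} [MeasurableSpace Ω] [NormedAddCommGroup E] [MeasurableSpace E]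
    (P : Measure Ω) (L : ℝ → Ω → E) : Prop :=
  (∀ t, Measurable (L t)) ∧
  (∀ᵐ ω ∂P, L 0 ω = 0) ∧
  (∀ ω, CadlagOn fun t => L t ω) ∧
  HasIndepIncrements P L ∧
  HasStatIncrements P L ∧
  ContinuousInProbability P L


private lemma exp_inj_of_im_zero {z w : ℂ} (hz : z.im = 0) (hw : w.im = 0)
    (h : Complex.exp z = Complex.exp w) : z = w := by
  have hz' : z = (z.re : ℂ) := Complex.ext rfl (by simp [hz])
  have hw' : w = (w.re : ℂ) := Complex.ext rfl (by simp [hw])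
  rw [hz', hw', ← Complex.ofReal_exp, ← Complex.ofReal_exp] at h
  have h2 : Real.exp z.re = Real.exp w.re := by exact_mod_cast h
  rw [hz', hw', Real.exp_eq_exp.mp h2]

private lemma sin_all_zero {b : ℝ} (h : ∀ t : ℝ, 0 ≤ t → Real.sin (t * b) = 0) : b = 0 := by
  by_contra hb
  rcases lt_or_gt_of_ne hb with hneg | hpos
  · have h1 := h (Real.pi / (2 * (-b))) (le_of_lt (div_pos Real.pi_pos (by linarith)))
    have : Real.pi / (2 * (-b)) * b = -(Real.pi / 2) := by field_simp
    rw [this, Real.sin_neg, Real.sin_pi_div_two] at h1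
    norm_num at h1
  · have h1 := h (Real.pi / (2 * b)) (by positivity)
    have : Real.pi / (2 * b) * b = Real.pi / 2 := by field_simp
    rw [this, Real.sin_pi_div_two] at h1
    norm_num at h1

private lemma quarter_sq_le_one_sub_cos {x : ℝ} (hx : |x| ≤ 1) : x ^ 2 / 4 ≤ 1 - Real.cos x := by
  have h := (abs_le.mp (Real.cos_bound hx)).2
  have h3 : |x| ^ 4 ≤ x ^ 2 := by
    have e : |x| ^ 4 = (x ^ 2) ^ 2 := by
      have h0 : |x| ^ 2 = x ^ 2 := sq_abs x
      calc |x| ^ 4 = (|x| ^ 2) ^ 2 := by ring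
        _ = (x ^ 2) ^ 2 := by rw [h0]
    have hx2 : x ^ 2 ≤ 1 := by
      have h0 : |x| ^ 2 = x ^ 2 := sq_abs x
      nlinarith [abs_nonneg x]
    rw [e]; nlinarith [sq_nonneg x]
  nlinarith

/-- A nontrivial symmetric strictly `α`-stable `H`-valued Lévy process
has `α ∈ (0,2]`, and its Lévy exponent has the form `ρ(u) = −‖u‖^α·f(u/‖u‖)` for a
symmetric continuous nonnegative function `f` on the unit sphere. -/
theorem symmetric_stable_exponent_form
    {H : Type*} [NormedAddCommGroup H] [InnerProductSpace ℝ H] [CompleteSpace H]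
    [SecondCountableTopology H] [MeasurableSpace H] [BorelSpace H]
    {Ω : Type*} [MeasurableSpace Ω] (P : Measure Ω) [IsProbabilityMeasure P]
    (Y : ℝ → Ω → H) (hY : IsLevyProcess P Y)
    (ρ : H → ℂ) (hρcont : Continuous ρ)
    (hρ : ∀ t : ℝ, 0 ≤ t → ∀ u : H,
      ∫ ω, Complex.exp (Complex.I * ((⟪u, Y t ω⟫ : ℝ) : ℂ)) ∂P = Complex.exp (t * ρ u))
    (α : ℝ) (hα : 0 < α)
    -- symmetric:
    (hsym : ∀ t : ℝ, 0 ≤ t → Measure.map (Y t) P = Measure.map (fun ω => -(Y t ω)) P)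
    -- strictly α-stable:
    (hstable : ∀ t : ℝ, 0 ≤ t →
      Measure.map (Y (t ^ α)) P = Measure.map (fun ω => t • Y 1 ω) P)
    -- nontrivial:
    (hnontriv : ∃ t : ℝ, 0 ≤ t ∧ 0 < P {ω | Y t ω ≠ 0}) :
    α ≤ 2 ∧
    ∃ f : H → ℝ,
      ContinuousOn f (Metric.sphere (0 : H) 1) ∧
      (∀ v ∈ Metric.sphere (0 : H) 1, 0 ≤ f v) ∧
      (∀ v ∈ Metric.sphere (0 : H) 1, f (-v) = f v) ∧
      (∀ u : H, u ≠ 0 → ρ u = -(((‖u‖ ^ α * f (‖u‖⁻¹ • u) : ℝ)) : ℂ)) ∧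
      (∀ u : H, (ρ u).im = 0) ∧ (∀ u : H, (ρ u).re ≤ 0) ∧
      (∀ t : ℝ, 0 ≤ t → ∀ u : H, ρ (t • u) = ((t ^ α : ℝ) : ℂ) * ρ u) := by
  have hmeas := hY.1
  -- continuity of the integrand as a function of x
  have hcontF : ∀ u : H, Continuous fun x : H => Complex.exp (Complex.I * ((⟪u, x⟫ : ℝ) : ℂ)) :=
    fun u => Complex.continuous_exp.comp
      (continuous_const.mul (Complex.continuous_ofReal.comp (innerSL ℝ u).continuous))
  have hnorm1 : ∀ r : ℝ, ‖Complex.exp (Complex.I * (r : ℂ))‖ = 1 := by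
    intro r
    rw [Complex.norm_exp]
    simp
  have hint : ∀ (t : ℝ) (u : H),
      Integrable (fun ω => Complex.exp (Complex.I * ((⟪u, Y t ω⟫ : ℝ) : ℂ))) P := by
    intro t u
    refine Integrable.mono' (integrable_const 1)
      (((hcontF u).measurable.comp (hmeas t)).aestronglyMeasurable) ?_
    exact ae_of_all _ fun ω => le_of_eq (hnorm1 _)
  -- transfer integrals along equal laws
  have hmap : ∀ (g h : Ω → H), Measurable g → Measurable h →
      Measure.map g P = Measure.map h P → ∀ u : H,
      ∫ ω, Complex.exp (Complex.I * ((⟪u, g ω⟫ : ℝ) : ℂ)) ∂P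
        = ∫ ω, Complex.exp (Complex.I * ((⟪u, h ω⟫ : ℝ) : ℂ)) ∂P := by
    intro g h hg hh heq u
    have hf : AEStronglyMeasurable (fun x : H => Complex.exp (Complex.I * ((⟪u, x⟫ : ℝ) : ℂ)))
        (Measure.map g P) := (hcontF u).aestronglyMeasurable
    rw [← integral_map hg.aemeasurable hf, heq,
      integral_map hh.aemeasurable (heq ▸ hf)]
  -- symmetry at the level of exponentials
  have hsymexp : ∀ t : ℝ, 0 ≤ t → ∀ u : H,
      Complex.exp ((t : ℂ) * ρ (-u)) = Complex.exp ((t : ℂ) * ρ u) := by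
    intro t ht u
    rw [← hρ t ht (-u), ← hρ t ht u]
    have h1 := hmap (Y t) (fun ω => -(Y t ω)) (hmeas t) ((hmeas t).neg) (hsym t ht) (-u)
    rw [h1]
    simp [inner_neg_neg]
  -- conjugation: conj of char function
  have hconj : ∀ t : ℝ, 0 ≤ t → ∀ u : H,
      (starRingEnd ℂ) (∫ ω, Complex.exp (Complex.I * ((⟪u, Y t ω⟫ : ℝ) : ℂ)) ∂P)
        = ∫ ω, Complex.exp (Complex.I * ((⟪-u, Y t ω⟫ : ℝ) : ℂ)) ∂P := by
    intro t ht u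
    rw [← integral_conj]
    congr 1
    funext ω
    rw [← Complex.exp_conj]
    congr 1
    simp [map_mul, Complex.conj_I, Complex.conj_ofReal, inner_neg_left]
  -- imaginary part vanishes
  have him : ∀ u : H, (ρ u).im = 0 := by
    intro u
    have key : ∀ t : ℝ, 0 ≤ t → (Complex.exp ((t : ℂ) * ρ u)).im = 0 := by
      intro t ht
      have h1 := hconj t ht u
      rw [hρ t ht u, hρ t ht (-u), hsymexp t ht u] at h1
      exact Complex.conj_eq_iff_im.mp h1
    have key2 : ∀ t : ℝ, 0 ≤ t → Real.sin (t * (ρ u).im) = 0 := by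
      intro t ht
      have h1 := key t ht
      rw [Complex.exp_im] at h1
      have h2 : ((t : ℂ) * ρ u).im = t * (ρ u).im := by simp
      have h3 : Real.exp (((t : ℂ) * ρ u).re) ≠ 0 := Real.exp_ne_zero _
      rw [h2] at h1
      exact (mul_eq_zero.mp h1).resolve_left h3
    exact sin_all_zero key2
  have hρreal : ∀ u : H, ρ u = (((ρ u).re : ℝ) : ℂ) := by
    intro u
    exact Complex.ext (by simp) (by simp [him u])
  -- real part nonpositive
  have hre : ∀ u : H, (ρ u).re ≤ 0 := by
    intro u
    have h1 : ‖Complex.exp ((1 : ℝ) * ρ u)‖ ≤ 1 := by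
      rw [← hρ 1 zero_le_one u]
      calc ‖∫ ω, Complex.exp (Complex.I * ((⟪u, Y 1 ω⟫ : ℝ) : ℂ)) ∂P‖
          ≤ ∫ ω, ‖Complex.exp (Complex.I * ((⟪u, Y 1 ω⟫ : ℝ) : ℂ))‖ ∂P :=
            norm_integral_le_integral_norm _
        _ = 1 := by simp [hnorm1]
    rw [Complex.norm_exp] at h1
    have h2 : ((1 : ℝ) * ρ u : ℂ).re = (ρ u).re := by simp
    rw [h2] at h1
    exact Real.exp_le_one_iff.mp h1
  -- negation invariance
  have hρneg : ∀ u : H, ρ (-u) = ρ u := by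
    intro u
    have h1 := hsymexp 1 zero_le_one u
    have h2 := exp_inj_of_im_zero (z := (1 : ℂ) * ρ (-u)) (w := (1 : ℂ) * ρ u)
      (by simp [him]) (by simp [him]) (by simpa using h1)
    simpa using h2
  -- scaling
  have hscale : ∀ t : ℝ, 0 ≤ t → ∀ u : H, ρ (t • u) = ((t ^ α : ℝ) : ℂ) * ρ u := by
    intro t ht u
    have htα : (0 : ℝ) ≤ t ^ α := Real.rpow_nonneg ht α
    have h1 : Complex.exp (((1 : ℝ) : ℂ) * ρ (t • u))
        = Complex.exp (((t ^ α : ℝ) : ℂ) * ρ u) := by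
      rw [← hρ 1 zero_le_one (t • u), ← hρ (t ^ α) htα u]
      have h2 := hmap (Y (t ^ α)) (fun ω => t • Y 1 ω) (hmeas _) ((hmeas 1).const_smul t)
        (hstable t ht) u
      rw [h2]
      congr 1
      funext ω
      rw [real_inner_smul_left, real_inner_smul_right]
    have h3 := exp_inj_of_im_zero (z := ((1 : ℝ) : ℂ) * ρ (t • u))
      (w := ((t ^ α : ℝ) : ℂ) * ρ u) (by simp [him]) (by simp [him]) h1
    simpa using h3
  -- cosine integral formula
  have hcos : ∀ u : H, ∀ t : ℝ, 0 ≤ t →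
      ∫ ω, Real.cos (t * ⟪u, Y 1 ω⟫) ∂P = Real.exp (t ^ α * (ρ u).re) := by
    intro u t ht
    have h1 : ∫ ω, Complex.exp (Complex.I * ((⟪t • u, Y 1 ω⟫ : ℝ) : ℂ)) ∂P
        = ((Real.exp (t ^ α * (ρ u).re) : ℝ) : ℂ) := by
      rw [hρ 1 zero_le_one (t • u), hscale t ht u]
      conv_lhs => rw [hρreal u]
      rw [Complex.ofReal_exp]
      congr 1
      push_cast
      ring
    calc ∫ ω, Real.cos (t * ⟪u, Y 1 ω⟫) ∂P
        = ∫ ω, (Complex.exp (Complex.I * ((⟪t • u, Y 1 ω⟫ : ℝ) : ℂ))).re ∂P := by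
          congr 1
          funext ω
          rw [mul_comm Complex.I, Complex.exp_ofReal_mul_I_re, real_inner_smul_left]
      _ = (∫ ω, Complex.exp (Complex.I * ((⟪t • u, Y 1 ω⟫ : ℝ) : ℂ)) ∂P).re :=
          integral_re (hint 1 (t • u))
      _ = Real.exp (t ^ α * (ρ u).re) := by rw [h1, Complex.ofReal_re]
  -- alpha ≤ 2
  have halpha : α ≤ 2 := by
    by_contra hgt
    push_neg at hgt
    have hinner : ∀ u : H, ∀ᵐ ω ∂P, ⟪u, Y 1 ω⟫ = 0 := by
      intro u
      set c := (ρ u).re with hc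
      have hc0 : c ≤ 0 := hre u
      set a : Ω → ℝ := fun ω => ⟪u, Y 1 ω⟫ with ha
      have hameas : Measurable a := (innerSL ℝ u).continuous.measurable.comp (hmeas 1)
      have hcosint : ∀ t : ℝ, Integrable (fun ω => Real.cos (t * a ω)) P := by
        intro t
        refine Integrable.mono' (integrable_const 1)
          ((Real.continuous_cos.comp (continuous_const.mul continuous_id)).measurable.comp
            hameas).aestronglyMeasurable ?_
        exact ae_of_all _ fun ω => by simpa using Real.abs_cos_le_one _
      have key : ∀ m : ℕ, ∀ᵐ ω ∂P, |a ω| ≤ (m : ℝ) → a ω = 0 := by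
        intro m
        have hAmeas : MeasurableSet {ω | |a ω| ≤ (m : ℝ)} :=
          measurableSet_le hameas.abs measurable_const
        have hI0 : ∫⁻ ω in {ω | |a ω| ≤ (m : ℝ)}, ENNReal.ofReal (a ω ^ 2) ∂P = 0 := by
          have hbound : ∀ n : ℕ, m ≤ n → 1 ≤ n →
              ∫⁻ ω in {ω | |a ω| ≤ (m : ℝ)}, ENNReal.ofReal (a ω ^ 2) ∂P
                ≤ ENNReal.ofReal (4 * (-c) * (n : ℝ) ^ ((2 : ℝ) - α)) := by
            intro n hmn h1n
            have hn0 : (0 : ℝ) < n := by exact_mod_cast Nat.lt_of_lt_of_le Nat.zero_lt_one h1n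
            set g : Ω → ℝ := fun ω => 4 * (n : ℝ) ^ 2 * (1 - Real.cos ((n : ℝ)⁻¹ * a ω)) with hg
            have hgnonneg : ∀ ω, 0 ≤ g ω := fun ω =>
              mul_nonneg (by positivity) (sub_nonneg.mpr (Real.cos_le_one _))
            have hgint : Integrable g P :=
              ((integrable_const (1 : ℝ)).sub (hcosint _)).const_mul _
            have step1 : ∫⁻ ω in {ω | |a ω| ≤ (m : ℝ)}, ENNReal.ofReal (a ω ^ 2) ∂P
                ≤ ∫⁻ ω, ENNReal.ofReal (g ω) ∂P := by
              refine le_trans (setLIntegral_mono' hAmeas fun ω hω => ?_)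
                (setLIntegral_le_lintegral _ _)
              refine ENNReal.ofReal_le_ofReal ?_
              have hωm : |a ω| ≤ (m : ℝ) := hω
              have hωn : |a ω| ≤ (n : ℝ) := le_trans hωm (by exact_mod_cast hmn)
              have habs : |(n : ℝ)⁻¹ * a ω| ≤ 1 := by
                rw [abs_mul, abs_inv, abs_of_pos hn0]
                rw [inv_mul_le_iff₀ hn0, mul_one]
                exact hωn
              have h4 := quarter_sq_le_one_sub_cos habs
              have h5 : 4 * (n : ℝ) ^ 2 * (((n : ℝ)⁻¹ * a ω) ^ 2 / 4)
                  ≤ 4 * (n : ℝ) ^ 2 * (1 - Real.cos ((n : ℝ)⁻¹ * a ω)) :=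
                mul_le_mul_of_nonneg_left h4 (by positivity)
              have haxsq : a ω ^ 2 = (n : ℝ) ^ 2 * ((n : ℝ)⁻¹ * a ω) ^ 2 := by
                field_simp
              have hgval : g ω = 4 * (n : ℝ) ^ 2 * (1 - Real.cos ((n : ℝ)⁻¹ * a ω)) := rfl
              rw [hgval]
              nlinarith [h5, haxsq]
            have step2 : ∫⁻ ω, ENNReal.ofReal (g ω) ∂P = ENNReal.ofReal (∫ ω, g ω ∂P) :=
              (ofReal_integral_eq_lintegral_ofReal hgint (ae_of_all _ hgnonneg)).symm
            have step3 : ∫ ω, g ω ∂P = 4 * (n : ℝ) ^ 2 * (1 - Real.exp (((n : ℝ)⁻¹) ^ α * c)) := by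
              simp only [hg]
              rw [MeasureTheory.integral_const_mul, integral_sub (integrable_const 1) (hcosint _),
                hcos u (n : ℝ)⁻¹ (inv_nonneg.mpr hn0.le)]
              simp [hc]
            have step4 : 4 * (n : ℝ) ^ 2 * (1 - Real.exp (((n : ℝ)⁻¹) ^ α * c))
                ≤ 4 * (-c) * (n : ℝ) ^ ((2 : ℝ) - α) := by
              have hpow : ((n : ℝ)⁻¹) ^ α = ((n : ℝ) ^ α)⁻¹ := Real.inv_rpow hn0.le α
              have hpos : (0 : ℝ) < (n : ℝ) ^ α := Real.rpow_pos_of_pos hn0 α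
              have h1x : 1 - Real.exp (((n : ℝ)⁻¹) ^ α * c) ≤ -(((n : ℝ)⁻¹) ^ α * c) := by
                have := Real.add_one_le_exp (((n : ℝ)⁻¹) ^ α * c)
                linarith
              have h2n : (n : ℝ) ^ (2 : ℕ) = (n : ℝ) ^ (2 : ℝ) := by
                rw [← Real.rpow_natCast (n : ℝ) 2]
                norm_num
              have hsplit : (n : ℝ) ^ ((2 : ℝ) - α) = (n : ℝ) ^ (2 : ℝ) * ((n : ℝ) ^ α)⁻¹ := by
                rw [Real.rpow_sub hn0, div_eq_mul_inv]
              have hnn : (0 : ℝ) ≤ 4 * (n : ℝ) ^ 2 := by positivity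
              calc 4 * (n : ℝ) ^ 2 * (1 - Real.exp (((n : ℝ)⁻¹) ^ α * c))
                  ≤ 4 * (n : ℝ) ^ 2 * (-(((n : ℝ)⁻¹) ^ α * c)) :=
                    mul_le_mul_of_nonneg_left h1x hnn
                _ = 4 * (-c) * ((n : ℝ) ^ (2 : ℕ) * ((n : ℝ) ^ α)⁻¹) := by
                    rw [hpow]; ring
                _ = 4 * (-c) * (n : ℝ) ^ ((2 : ℝ) - α) := by
                    rw [h2n, hsplit]
            calc ∫⁻ ω in {ω | |a ω| ≤ (m : ℝ)}, ENNReal.ofReal (a ω ^ 2) ∂P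
                ≤ ∫⁻ ω, ENNReal.ofReal (g ω) ∂P := step1
              _ = ENNReal.ofReal (∫ ω, g ω ∂P) := step2
              _ ≤ ENNReal.ofReal (4 * (-c) * (n : ℝ) ^ ((2 : ℝ) - α)) := by
                  refine ENNReal.ofReal_le_ofReal ?_
                  rw [step3]
                  exact step4
          have htend : Tendsto (fun n : ℕ => ENNReal.ofReal (4 * (-c) * (n : ℝ) ^ ((2 : ℝ) - α)))
              atTop (nhds 0) := by
            have h1 := (tendsto_rpow_neg_atTop (by linarith : (0 : ℝ) < α - 2)).comp
              (tendsto_natCast_atTop_atTop (R := ℝ))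
            have h2 : Tendsto (fun n : ℕ => (n : ℝ) ^ ((2 : ℝ) - α)) atTop (nhds 0) := by
              have he : (fun n : ℕ => (n : ℝ) ^ ((2 : ℝ) - α))
                  = (fun x : ℝ => x ^ (-(α - 2))) ∘ (Nat.cast : ℕ → ℝ) := by
                funext n
                simp [Function.comp, neg_sub]
              rw [he]
              exact h1
            have h3 : Tendsto (fun n : ℕ => 4 * (-c) * (n : ℝ) ^ ((2 : ℝ) - α)) atTop (nhds 0) := by
              simpa using h2.const_mul (4 * (-c))
            simpa using ENNReal.tendsto_ofReal h3
          have hle0 : ∫⁻ ω in {ω | |a ω| ≤ (m : ℝ)}, ENNReal.ofReal (a ω ^ 2) ∂P ≤ 0 := by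
            refine ge_of_tendsto htend ?_
            filter_upwards [eventually_ge_atTop m, eventually_ge_atTop 1] with n h1 h2
            exact hbound n h1 h2
          exact le_antisymm hle0 zero_le
        have hfmeas : Measurable fun ω => ENNReal.ofReal (a ω ^ 2) :=
          ENNReal.measurable_ofReal.comp (hameas.pow_const 2)
        have hae1 : (fun ω => ENNReal.ofReal (a ω ^ 2))
            =ᵐ[P.restrict {ω | |a ω| ≤ (m : ℝ)}] 0 := (lintegral_eq_zero_iff hfmeas).mp hI0
        have hae2 := (ae_restrict_iff' hAmeas).mp hae1
        filter_upwards [hae2] with ω hω hm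
        have h5 : ENNReal.ofReal (a ω ^ 2) = 0 := hω hm
        have h6 : a ω ^ 2 ≤ 0 := ENNReal.ofReal_eq_zero.mp h5
        nlinarith [sq_nonneg (a ω)]
      have hall : ∀ᵐ ω ∂P, ∀ m : ℕ, |a ω| ≤ (m : ℝ) → a ω = 0 := ae_all_iff.mpr key
      filter_upwards [hall] with ω hω
      obtain ⟨m, hm⟩ := exists_nat_ge |a ω|
      exact hω m hm
    have hY1 : ∀ᵐ ω ∂P, Y 1 ω = 0 := by
      haveI : Nonempty H := ⟨0⟩
      obtain ⟨sq, hds⟩ := TopologicalSpace.exists_dense_seq H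
      have hae : ∀ᵐ ω ∂P, ∀ n : ℕ, ⟪sq n, Y 1 ω⟫ = 0 := ae_all_iff.mpr fun n => hinner (sq n)
      filter_upwards [hae] with ω hω
      have hfun : (fun v : H => (⟪v, Y 1 ω⟫ : ℝ)) = fun _ => (0 : ℝ) := by
        refine Continuous.ext_on hds (continuous_id.inner continuous_const) continuous_const ?_
        rintro v ⟨n, rfl⟩
        exact hω n
      exact inner_self_eq_zero.mp (congrFun hfun (Y 1 ω))
    obtain ⟨t₀, ht₀, hpos⟩ := hnontriv
    have hmap2 := hstable (t₀ ^ α⁻¹) (Real.rpow_nonneg ht₀ _)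
    rw [Real.rpow_inv_rpow ht₀ (ne_of_gt hα)] at hmap2
    have hset : MeasurableSet {x : H | x ≠ 0} := by
      have : {x : H | x ≠ 0} = ({0} : Set H)ᶜ := by ext x; simp
      rw [this]
      exact (measurableSet_singleton 0).compl
    have h1 : P {ω | Y t₀ ω ≠ 0} = P {ω | t₀ ^ α⁻¹ • Y 1 ω ≠ 0} := by
      have e1 : {ω | Y t₀ ω ≠ 0} = Y t₀ ⁻¹' {x | x ≠ 0} := rfl
      have e2 : {ω | t₀ ^ α⁻¹ • Y 1 ω ≠ 0}
          = (fun ω => t₀ ^ α⁻¹ • Y 1 ω) ⁻¹' {x | x ≠ 0} := rfl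
      have hsm : Measurable fun ω => t₀ ^ α⁻¹ • Y 1 ω := (hmeas 1).const_smul _
      rw [e1, e2, ← Measure.map_apply (hmeas t₀) hset, hmap2,
        Measure.map_apply hsm hset]
    have h2 : P {ω | t₀ ^ α⁻¹ • Y 1 ω ≠ 0} = 0 := by
      refine measure_mono_null (fun ω h => ?_) (ae_iff.mp hY1)
      intro h0
      exact h (by rw [show Y 1 ω = 0 from h0, smul_zero])
    rw [h1, h2] at hpos
    exact lt_irrefl 0 hpos
  refine ⟨halpha, fun v => -(ρ v).re, ?_, ?_, ?_, ?_, him, hre, hscale⟩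
  · exact ((Complex.continuous_re.comp hρcont).neg).continuousOn
  · exact fun v _ => neg_nonneg.mpr (hre v)
  · intro v _
    show -(ρ (-v)).re = -(ρ v).re
    rw [hρneg]
  · intro u hu
    have hn : ‖u‖ ≠ 0 := norm_ne_zero_iff.mpr hu
    have h1 : ρ u = ((‖u‖ ^ α : ℝ) : ℂ) * ρ (‖u‖⁻¹ • u) := by
      conv_lhs => rw [show u = ‖u‖ • (‖u‖⁻¹ • u) by rw [smul_smul, mul_inv_cancel₀ hn, one_smul]]
      exact hscale ‖u‖ (norm_nonneg u) (‖u‖⁻¹ • u)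
    rw [h1, hρreal (‖u‖⁻¹ • u)]
    push_cast
    ring
end
end

section
/- Let α ∈ (1, 2) and let L be an H-valued Lévy process which is strictly α-stable (L(t^α) and t·L(1) have the same law for all t ≥ 0), integrable (E‖L(1)‖ < ∞) and nontrivial (P(L(1) ≠ 0) > 0). Let Θ be a subordinator independent of L and set X(t) := L(Θ(t)). Then X(1) is (Bochner) integrable if and only if E[Θ(1)^{1/α}] < ∞. -/
open MeasureTheory ProbabilityTheory Filter Set
open scoped RealInnerProductSpace ENNReal NNReal

noncomputable section

/-- The σ-algebra generated by the whole path of a process. -/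
def pathSigmaAlg {Ω H : Type*} [MeasurableSpace H] (L : ℝ → Ω → H) :
    MeasurableSpace Ω :=
  MeasurableSpace.comap (fun ω => fun t : ℝ => L t ω) MeasurableSpace.pi


/-- Joint measurability of a right-continuous process. -/
lemma aux_joint_measurable {Ω H : Type*} [NormedAddCommGroup H]
    [MeasurableSpace H] [BorelSpace H] [m : MeasurableSpace Ω]
    (L : ℝ → Ω → H) (hmeas : ∀ t, Measurable (L t))
    (hrc : ∀ ω, ∀ t : ℝ, 0 ≤ t → ContinuousWithinAt (fun s => L s ω) (Set.Ici t) t) :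
    Measurable (fun p : ℝ × Ω => L (max p.1 0) p.2) := by
  have hGn : ∀ n : ℕ,
      Measurable fun q : ℝ × Ω => L ((⌈(2:ℝ)^n * max q.1 0⌉ : ℝ) / 2^n) q.2 := by
    intro n
    have hG : Measurable fun q : Ω × ℤ => L ((q.2 : ℝ) / 2^n) q.1 :=
      measurable_from_prod_countable_left fun k => hmeas ((k : ℝ) / 2^n)
    have hv : Measurable fun s : ℝ => (⌈(2:ℝ)^n * max s 0⌉ : ℤ) :=
      Int.measurable_ceil.comp (measurable_const.mul (measurable_id.max measurable_const))
    exact hG.comp (measurable_snd.prodMk (hv.comp measurable_fst))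
  apply measurable_of_tendsto_metrizable hGn
  rw [tendsto_pi_nhds]
  intro p
  set r : ℝ := max p.1 0 with hr
  have hr0 : 0 ≤ r := le_max_right _ _
  set c : ℕ → ℝ := fun n => (⌈(2:ℝ)^n * r⌉ : ℝ) / 2^n with hc
  have hpow : ∀ n : ℕ, (0:ℝ) < 2^n := fun n => pow_pos two_pos n
  have hge : ∀ n, r ≤ c n := by
    intro n
    rw [hc, le_div_iff₀ (hpow n)]
    calc r * 2^n = 2^n * r := mul_comm _ _
      _ ≤ (⌈(2:ℝ)^n * r⌉ : ℝ) := Int.le_ceil _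
  have hle : ∀ n, c n ≤ r + (1/2)^n := by
    intro n
    rw [hc, div_le_iff₀ (hpow n)]
    have h1 : ((1:ℝ)/2)^n * 2^n = 1 := by
      rw [← mul_pow]; norm_num
    calc (⌈(2:ℝ)^n * r⌉ : ℝ) ≤ 2^n * r + 1 := (Int.ceil_lt_add_one _).le
      _ = (r + (1/2)^n) * 2^n := by rw [add_mul, h1]; ring
  have hlim : Tendsto c atTop (nhds r) := by
    have hub : Tendsto (fun n : ℕ => r + ((1:ℝ)/2)^n) atTop (nhds r) := by
      have := tendsto_pow_atTop_nhds_zero_of_lt_one (by norm_num : (0:ℝ) ≤ 1/2)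
        (by norm_num : (1:ℝ)/2 < 1)
      simpa using tendsto_const_nhds.add this
    exact tendsto_of_tendsto_of_tendsto_of_le_of_le tendsto_const_nhds hub hge hle
  have hlim' : Tendsto c atTop (nhdsWithin r (Set.Ici r)) :=
    tendsto_nhdsWithin_iff.2 ⟨hlim, Filter.Eventually.of_forall hge⟩
  exact ((hrc p.2 r hr0).tendsto.comp hlim')

/-- Freezing lemma for lower integrals. -/
lemma aux_freeze {Ω : Type*} {𝓖 : MeasurableSpace Ω} [m : MeasurableSpace Ω] (h𝓖 : 𝓖 ≤ m)
    (P : Measure Ω) [IsProbabilityMeasure P]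
    {T : Ω → ℝ} (hT : Measurable T)
    (hind : ∀ s t, MeasurableSet s → MeasurableSet[𝓖] t →
      P (T ⁻¹' s ∩ t) = P (T ⁻¹' s) * P t)
    {F : ℝ × Ω → ℝ≥0∞}
    (hF : @Measurable (ℝ × Ω) ℝ≥0∞ (@Prod.instMeasurableSpace ℝ Ω Real.measurableSpace 𝓖) _ F) :
    ∫⁻ ω, F (T ω, ω) ∂P = ∫⁻ s, (∫⁻ ω, F (s, ω) ∂P) ∂(P.map T) := by
  have hP'univ : P.trim h𝓖 Set.univ = 1 := by
    rw [trim_measurableSet_eq h𝓖 MeasurableSet.univ]; exact measure_univ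
  haveI hP' : IsProbabilityMeasure (P.trim h𝓖) := ⟨hP'univ⟩
  haveI : IsProbabilityMeasure (P.map T) := Measure.isProbabilityMeasure_map hT.aemeasurable
  have hιm : @Measurable Ω (ℝ × Ω) m (@Prod.instMeasurableSpace ℝ Ω Real.measurableSpace 𝓖)
      (fun ω => (T ω, ω)) := Measurable.prodMk hT (measurable_id'' h𝓖)
  set Pprod : @Measure (ℝ × Ω) (@Prod.instMeasurableSpace ℝ Ω Real.measurableSpace 𝓖) :=
    @Measure.prod ℝ Ω Real.measurableSpace 𝓖 (P.map T) (P.trim h𝓖) with hPprod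
  have hmap : @Measure.map Ω (ℝ × Ω) m (@Prod.instMeasurableSpace ℝ Ω Real.measurableSpace 𝓖)
      (fun ω => (T ω, ω)) P = Pprod := by
    rw [hPprod]
    refine (@Measure.prod_eq ℝ Ω Real.measurableSpace 𝓖 (P.map T) inferInstance
      (P.trim h𝓖) inferInstance _ ?_).symm
    intro s t hs ht
    rw [Measure.map_apply hιm (MeasurableSet.prod hs ht), Measure.map_apply hT hs,
        trim_measurableSet_eq h𝓖 ht]
    have hpre : (fun ω => (T ω, ω)) ⁻¹' (s ×ˢ t) = T ⁻¹' s ∩ t := by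
      ext ω; simp [Set.mem_prod]
    rw [hpre]
    exact hind s t hs ht
  have htonelli : ∫⁻ p, F p ∂Pprod = ∫⁻ s, ∫⁻ ω, F (s, ω) ∂(P.trim h𝓖) ∂(P.map T) :=
    @MeasureTheory.lintegral_prod ℝ Ω Real.measurableSpace 𝓖 (P.map T) (P.trim h𝓖)
      inferInstance F hF.aemeasurable
  calc ∫⁻ ω, F (T ω, ω) ∂P
      = ∫⁻ p, F p ∂(@Measure.map Ω (ℝ × Ω) m
          (@Prod.instMeasurableSpace ℝ Ω Real.measurableSpace 𝓖) (fun ω => (T ω, ω)) P) :=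
        (@lintegral_map Ω (ℝ × Ω) m (@Prod.instMeasurableSpace ℝ Ω Real.measurableSpace 𝓖) P F _ hF hιm).symm
    _ = ∫⁻ p, F p ∂Pprod := by rw [hmap]
    _ = ∫⁻ s, ∫⁻ ω, F (s, ω) ∂(P.trim h𝓖) ∂(P.map T) := htonelli
    _ = ∫⁻ s, ∫⁻ ω, F (s, ω) ∂P ∂(P.map T) := by
        refine lintegral_congr fun s => ?_
        exact lintegral_trim h𝓖 (hF.comp (@measurable_prodMk_left ℝ Ω _ 𝓖 s))

/-- For `α ∈ (1,2)` and a nontrivial integrable strictly `α`-stable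
`H`-valued Lévy process `L` subordinated by an independent subordinator `Θ`, the process
`X(1) = L(Θ(1))` is integrable iff `E[Θ(1)^{1/α}] < ∞`. -/
theorem stable_subordination_integrability
    {H : Type*} [NormedAddCommGroup H] [InnerProductSpace ℝ H] [CompleteSpace H]
    [SecondCountableTopology H] [MeasurableSpace H] [BorelSpace H]
    {Ω : Type*} [MeasurableSpace Ω] (P : Measure Ω) [IsProbabilityMeasure P]
    (α : ℝ) (hα1 : 1 < α) (hα2 : α < 2)
    (L : ℝ → Ω → H) (hL : IsLevyProcess P L)
    -- strictly α-stable: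
    (hstable : ∀ t : ℝ, 0 ≤ t →
      Measure.map (L (t ^ α)) P = Measure.map (fun ω => t • L 1 ω) P)
    (hLint : Integrable (L 1) P)
    -- nontrivial:
    (hnontriv : 0 < P {ω | L 1 ω ≠ 0})
    -- a subordinator Θ, independent of L:
    (Θ : ℝ → Ω → ℝ) (hΘ : IsLevyProcess P Θ)
    (hΘmono : ∀ᵐ ω ∂P, MonotoneOn (fun t => Θ t ω) (Set.Ici 0))
    (hΘL : IndepFun (fun ω => fun t : ℝ => Θ t ω) (fun ω => fun t : ℝ => L t ω) P) :
    Integrable (fun ω => L (Θ 1 ω) ω) P ↔ Integrable (fun ω => Θ 1 ω ^ (1 / α)) P := by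

  classical
  obtain ⟨hLmeas, hL0, hLcad, -, -, -⟩ := hL
  obtain ⟨hΘmeas, hΘ0, -, -, -, -⟩ := hΘ
  have hα0 : (0:ℝ) < α := lt_trans one_pos hα1
  have hαne : α ≠ 0 := ne_of_gt hα0
  have hexp : (0:ℝ) ≤ 1 / α := (one_div_nonneg).mpr hα0.le
  set T : Ω → ℝ := Θ 1 with hTdef
  have hTmeas : Measurable T := hΘmeas 1
  have hTnn : ∀ᵐ ω ∂P, 0 ≤ T ω := by
    filter_upwards [hΘ0, hΘmono] with ω h0 hmono
    have h01 : Θ 0 ω ≤ Θ 1 ω :=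
      hmono Set.self_mem_Ici (Set.mem_Ici.mpr zero_le_one) zero_le_one
    rw [h0] at h01
    exact h01
  -- the σ-algebra generated by L and its basic properties
  have hpathL : Measurable (fun ω => fun t : ℝ => L t ω) := measurable_pi_lambda _ hLmeas
  have h𝓖 : pathSigmaAlg L ≤ (inferInstance : MeasurableSpace Ω) :=
    measurable_iff_comap_le.mp hpathL
  have hL𝓖 : ∀ t, Measurable[pathSigmaAlg L] (L t) := by
    intro t
    have h1 : @Measurable Ω (ℝ → H) (pathSigmaAlg L) MeasurableSpace.pi
        (fun ω => fun t : ℝ => L t ω) := Measurable.of_comap_le le_rfl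
    exact (measurable_pi_apply t).comp h1
  have hrc : ∀ ω, ∀ t : ℝ, 0 ≤ t → ContinuousWithinAt (fun s => L s ω) (Set.Ici t) t :=
    fun ω t ht => (hLcad ω).1 t ht
  have hnn : Measurable fun x : H => (‖x‖₊ : ℝ≥0∞) :=
    measurable_nnnorm.coe_nnreal_ennreal
  -- joint measurability
  have hjoint : Measurable (fun p : ℝ × Ω => L (max p.1 0) p.2) :=
    aux_joint_measurable L hLmeas hrc
  have hjointG := @aux_joint_measurable Ω H _ _ _ (pathSigmaAlg L) L hL𝓖 hrc
  have hF𝓖 : @Measurable (ℝ × Ω) ℝ≥0∞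
      (@Prod.instMeasurableSpace ℝ Ω Real.measurableSpace (pathSigmaAlg L)) _
      (fun p : ℝ × Ω => (‖L (max p.1 0) p.2‖₊ : ℝ≥0∞)) := hnn.comp hjointG
  -- independence
  have hTL : IndepFun T (fun ω => fun t : ℝ => L t ω) P :=
    hΘL.comp (measurable_pi_apply (1:ℝ)) measurable_id
  have hind : ∀ s t, MeasurableSet s → MeasurableSet[pathSigmaAlg L] t →
      P (T ⁻¹' s ∩ t) = P (T ⁻¹' s) * P t := by
    intro s t hs ht
    obtain ⟨t', ht', rfl⟩ := ht
    exact hTL.measure_inter_preimage_eq_mul s t' hs ht'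
  -- the scaling identity
  set c' : ℝ≥0∞ := ∫⁻ ω, (‖L 1 ω‖₊ : ℝ≥0∞) ∂P with hc'def
  have hstab : ∀ s : ℝ, 0 ≤ s →
      ∫⁻ ω, (‖L s ω‖₊ : ℝ≥0∞) ∂P = ENNReal.ofReal (s ^ (1/α)) * c' := by
    intro s hs
    have ht0 : 0 ≤ s ^ (1/α) := Real.rpow_nonneg hs _
    have hts : (s ^ (1/α)) ^ α = s := by
      rw [← Real.rpow_mul hs, one_div_mul_cancel hαne, Real.rpow_one]
    calc ∫⁻ ω, (‖L s ω‖₊ : ℝ≥0∞) ∂P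
        = ∫⁻ x, (‖x‖₊ : ℝ≥0∞) ∂(P.map (L s)) := (lintegral_map hnn (hLmeas s)).symm
      _ = ∫⁻ x, (‖x‖₊ : ℝ≥0∞) ∂(P.map (fun ω => (s ^ (1/α)) • L 1 ω)) := by
          rw [show (L s) = L ((s ^ (1/α)) ^ α) by rw [hts], hstable _ ht0]
      _ = ∫⁻ ω, (‖(s ^ (1/α)) • L 1 ω‖₊ : ℝ≥0∞) ∂P :=
          lintegral_map hnn ((continuous_const_smul _).measurable.comp (hLmeas 1))
      _ = ∫⁻ ω, ENNReal.ofReal (s ^ (1/α)) * (‖L 1 ω‖₊ : ℝ≥0∞) ∂P := by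
          refine lintegral_congr fun ω => ?_
          rw [nnnorm_smul, ENNReal.coe_mul]; congr 1; exact Real.enorm_eq_ofReal ht0
      _ = ENNReal.ofReal (s ^ (1/α)) * c' := lintegral_const_mul _ (hLmeas 1).nnnorm.coe_nnreal_ennreal
  -- the key identity
  have key : ∫⁻ ω, (‖L (max (T ω) 0) ω‖₊ : ℝ≥0∞) ∂P
      = (∫⁻ ω, ENNReal.ofReal ((max (T ω) 0) ^ (1/α)) ∂P) * c' := by
    have hfree : ∫⁻ ω, (‖L (max (T ω) 0) ω‖₊ : ℝ≥0∞) ∂P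
        = ∫⁻ s, ∫⁻ ω, (‖L (max s 0) ω‖₊ : ℝ≥0∞) ∂P ∂(P.map T) :=
      aux_freeze h𝓖 P hTmeas hind hF𝓖
    rw [hfree]
    have hg : Measurable fun s : ℝ => ENNReal.ofReal ((max s 0) ^ (1/α)) * c' :=
      (ENNReal.measurable_ofReal.comp ((Real.continuous_rpow_const hexp).measurable.comp
        (measurable_id.max measurable_const))).mul_const _
    calc ∫⁻ s, ∫⁻ ω, (‖L (max s 0) ω‖₊ : ℝ≥0∞) ∂P ∂(P.map T)
        = ∫⁻ s, ENNReal.ofReal ((max s 0) ^ (1/α)) * c' ∂(P.map T) :=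
          lintegral_congr fun s => hstab _ (le_max_right _ _)
      _ = ∫⁻ ω, ENNReal.ofReal ((max (T ω) 0) ^ (1/α)) * c' ∂P := lintegral_map hg hTmeas
      _ = (∫⁻ ω, ENNReal.ofReal ((max (T ω) 0) ^ (1/α)) ∂P) * c' := by
          rw [lintegral_mul_const]
          exact ENNReal.measurable_ofReal.comp
            ((Real.continuous_rpow_const hexp).measurable.comp (hTmeas.max measurable_const))
  have hmaxT : ∀ᵐ ω ∂P, max (T ω) 0 = T ω := hTnn.mono fun ω h => max_eq_left h
  set I : ℝ≥0∞ := ∫⁻ ω, ENNReal.ofReal (T ω ^ (1/α)) ∂P with hIdef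
  have hXlint : ∫⁻ ω, (‖L (T ω) ω‖₊ : ℝ≥0∞) ∂P = I * c' := by
    have h1 : ∫⁻ ω, (‖L (T ω) ω‖₊ : ℝ≥0∞) ∂P
        = ∫⁻ ω, (‖L (max (T ω) 0) ω‖₊ : ℝ≥0∞) ∂P :=
      lintegral_congr_ae (hmaxT.mono fun ω h => by simp only [h])
    have h2 : (∫⁻ ω, ENNReal.ofReal ((max (T ω) 0) ^ (1/α)) ∂P) = I :=
      lintegral_congr_ae (hmaxT.mono fun ω h => by simp only [h])
    rw [h1, key, h2]
  have hYlint : ∫⁻ ω, (‖T ω ^ (1/α)‖₊ : ℝ≥0∞) ∂P = I :=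
    lintegral_congr_ae (hTnn.mono fun ω h => by
      exact Real.enorm_eq_ofReal (Real.rpow_nonneg h (1/α)))
  -- the constant c' is positive and finite
  have hc'fin : c' < ⊤ := hLint.hasFiniteIntegral
  have hc'0 : c' ≠ 0 := by
    intro h
    have h0 : (fun ω => (‖L 1 ω‖₊ : ℝ≥0∞)) =ᵐ[P] 0 :=
      (lintegral_eq_zero_iff (hLmeas 1).nnnorm.coe_nnreal_ennreal).mp h
    have h1 : ∀ᵐ ω ∂P, L 1 ω = 0 := h0.mono fun ω hω => by simpa using hω
    rw [ae_iff] at h1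
    exact absurd h1 (ne_of_gt hnontriv)
  -- measurability statements
  have hXm : Measurable fun ω => L (max (T ω) 0) ω :=
    hjoint.comp (hTmeas.prodMk measurable_id)
  have hXaesm : AEStronglyMeasurable (fun ω => L (T ω) ω) P :=
    hXm.aestronglyMeasurable.congr (hmaxT.mono fun ω h => by simp only [h])
  have hYm : Measurable fun ω => T ω ^ (1/α) :=
    (Real.continuous_rpow_const hexp).measurable.comp hTmeas
  constructor
  · intro hX
    have hfinX : (∫⁻ ω, (‖L (T ω) ω‖₊ : ℝ≥0∞) ∂P) < ⊤ := hX.hasFiniteIntegral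
    rw [hXlint] at hfinX
    have hI : I < ⊤ := by
      by_contra hItop
      rw [not_lt, top_le_iff] at hItop
      rw [hItop, ENNReal.top_mul hc'0] at hfinX
      exact absurd hfinX (lt_irrefl _)
    refine ⟨hYm.aestronglyMeasurable, ?_⟩
    show (∫⁻ ω, (‖T ω ^ (1/α)‖₊ : ℝ≥0∞) ∂P) < ⊤
    rw [hYlint]; exact hI
  · intro hY
    have hfinY : (∫⁻ ω, (‖T ω ^ (1/α)‖₊ : ℝ≥0∞) ∂P) < ⊤ := hY.hasFiniteIntegral
    rw [hYlint] at hfinY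
    refine ⟨hXaesm, ?_⟩
    show (∫⁻ ω, (‖L (T ω) ω‖₊ : ℝ≥0∞) ∂P) < ⊤
    rw [hXlint]
    exact ENNReal.mul_lt_top hfinY hc'fin


end
end

section
/- Let H be a separable real Hilbert space, ν_2 a finite Borel measure on H, and μ_2 := e^{−ν_2(H)}·Σ_{n=0}^∞ ν_2^{*n}/n! the associated compound Poisson probability measure. Let μ_1 be any Borel probability measure on H and let g : H → ℝ_+ be measurable and submultiplicative (g(x + y) ≤ a·g(x)·g(y) for some a > 0 and all x, y). If ∫_H g d(μ_1 * μ_2) < ∞ (equivalently, ∫_H ∫_H g(x + y) μ_2(dy) μ_1(dx) < ∞), then ∫_H g dν_2 < ∞. -/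
open MeasureTheory ProbabilityTheory Filter Set
open scoped RealInnerProductSpace ENNReal NNReal

noncomputable section

/-- Convolution of two (finite Borel) measures on an additive group:
`(α ∗ β)(B) = ∫ β(B − x) α(dx)`, realised as the pushforward of the product measure
under addition. -/
def mconv {G : Type*} [MeasurableSpace G] [Add G] (μ ν : Measure G) : Measure G :=
  Measure.map (fun p : G × G => p.1 + p.2) (μ.prod ν)

/-- Convolution powers of a measure: `ν^{*0} = δ_0`, `ν^{*(n+1)} = ν ∗ ν^{*n}`. -/
def convPow {G : Type*} [MeasurableSpace G] [Add G] [Zero G] (ν : Measure G) : ℕ → Measure G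
  | 0 => Measure.dirac 0
  | n + 1 => mconv ν (convPow ν n)

/-- The compound Poisson distribution at time `t` generated by a finite measure `ν`:
`e^{−t·ν(G)}·Σ_{n≥0} (tⁿ/n!)·ν^{*n}`. -/
def cpoisson {G : Type*} [MeasurableSpace G] [Add G] [Zero G] (ν : Measure G) (t : ℝ) :
    Measure G :=
  ENNReal.ofReal (Real.exp (-(t * (ν Set.univ).toReal))) •
    Measure.sum fun n : ℕ => ENNReal.ofReal (t ^ n / n.factorial) • convPow ν n

/-- The exponential function on `ℝ≥0∞` (with `eexp ⊤ = ⊤`), given by the usual power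
series; it agrees with `Real.exp` on finite values. -/
def eexp (x : ℝ≥0∞) : ℝ≥0∞ := ∑' n : ℕ, x ^ n / (n.factorial : ℝ≥0∞)

instance mconv_finite {G : Type*} [MeasurableSpace G] [Add G] (μ ν : Measure G)
    [IsFiniteMeasure μ] [IsFiniteMeasure ν] : IsFiniteMeasure (mconv μ ν) := by
  unfold mconv; infer_instance

instance convPow_finite {G : Type*} [MeasurableSpace G] [Add G] [Zero G] (ν : Measure G)
    [IsFiniteMeasure ν] (n : ℕ) : IsFiniteMeasure (convPow ν n) := by
  induction n with
  | zero => unfold convPow; infer_instance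
  | succ n ih => unfold convPow; infer_instance

instance cpoisson_sfinite {G : Type*} [MeasurableSpace G] [Add G] [Zero G] (ν : Measure G)
    [IsFiniteMeasure ν] (t : ℝ) : SFinite (cpoisson ν t) := by
  unfold cpoisson; infer_instance

lemma lintegral_mconv {G : Type*} [MeasurableSpace G] [AddGroup G] [MeasurableAdd₂ G]
    (μ ν : Measure G) [SFinite ν] (f : G → ℝ≥0∞) (hf : Measurable f) :
    ∫⁻ x, f x ∂(mconv μ ν) = ∫⁻ x, ∫⁻ y, f (x + y) ∂ν ∂μ := by
  rw [mconv, lintegral_map hf measurable_add]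
  exact lintegral_prod _ (hf.comp measurable_add).aemeasurable

/-- If `g` is submultiplicative and `∫ g d(μ₁ ∗ μ₂) < ∞`, where `μ₂` is
the compound Poisson probability measure generated by a finite measure `ν₂` and `μ₁` is
any probability measure, then `∫ g dν₂ < ∞`. -/
theorem finite_levy_integral_of_finite_convolution_integral
    {H : Type*} [NormedAddCommGroup H] [InnerProductSpace ℝ H] [CompleteSpace H]
    [SecondCountableTopology H] [MeasurableSpace H] [BorelSpace H]
    (ν₂ : Measure H) [IsFiniteMeasure ν₂]
    (μ₁ : Measure H) [IsProbabilityMeasure μ₁]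
    (g : H → ℝ≥0) (hg : Measurable g)
    (a : ℝ≥0) (ha : 0 < a) (hsub : ∀ x y : H, g (x + y) ≤ a * g x * g y)
    (h : ∫⁻ x, (g x : ℝ≥0∞) ∂(mconv μ₁ (cpoisson ν₂ 1)) < ⊤) :
    ∫⁻ x, (g x : ℝ≥0∞) ∂ν₂ < ⊤ := by
  set μ₂ := cpoisson ν₂ 1 with hμ₂
  have hg' : Measurable fun x => (g x : ℝ≥0∞) := hg.coe_nnreal_ennreal
  rw [lintegral_mconv μ₁ μ₂ _ hg'] at h
  have hmeas : Measurable fun x => ∫⁻ y, (g (x + y) : ℝ≥0∞) ∂μ₂ :=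
    Measurable.lintegral_prod_right (f := fun x y => (g (x + y) : ℝ≥0∞))
      (hg'.comp measurable_add)
  have hae : ∀ᵐ x ∂μ₁, (∫⁻ y, (g (x + y) : ℝ≥0∞) ∂μ₂) < ⊤ := ae_lt_top hmeas h.ne
  obtain ⟨x₀, hx₀⟩ := hae.exists
  have hdom : ∀ y, (g y : ℝ≥0∞) ≤ (a : ℝ≥0∞) * g (-x₀) * g (x₀ + y) := by
    intro y
    have := hsub (-x₀) (x₀ + y)
    rw [neg_add_cancel_left] at this
    exact_mod_cast this
  have hμ₂fin : ∫⁻ y, (g y : ℝ≥0∞) ∂μ₂ < ⊤ := by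
    calc ∫⁻ y, (g y : ℝ≥0∞) ∂μ₂ ≤ ∫⁻ y, (a : ℝ≥0∞) * g (-x₀) * g (x₀ + y) ∂μ₂ :=
          lintegral_mono hdom
      _ = (a : ℝ≥0∞) * g (-x₀) * ∫⁻ y, (g (x₀ + y) : ℝ≥0∞) ∂μ₂ := by
          have hm : Measurable fun y => (g (x₀ + y) : ℝ≥0∞) :=
            hg'.comp (measurable_const_add x₀)
          rw [lintegral_const_mul _ hm]
      _ < ⊤ := ENNReal.mul_lt_top (by finiteness) hx₀
  set c := ENNReal.ofReal (Real.exp (-(1 * (ν₂ Set.univ).toReal))) with hc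
  have hc0 : c ≠ 0 := by
    simp [hc, Real.exp_pos]
  rw [hμ₂, cpoisson, lintegral_smul_measure, lintegral_sum_measure] at hμ₂fin
  have hsum : (∑' n : ℕ, ∫⁻ y, (g y : ℝ≥0∞)
      ∂(ENNReal.ofReal ((1:ℝ) ^ n / n.factorial) • convPow ν₂ n)) ≠ ⊤ := by
    intro hS
    rw [hS, smul_eq_mul, ENNReal.mul_top hc0] at hμ₂fin
    exact (lt_irrefl ⊤ hμ₂fin)
  have hterm : ∫⁻ y, (g y : ℝ≥0∞)
      ∂(ENNReal.ofReal ((1:ℝ) ^ 1 / (1:ℕ).factorial) • convPow ν₂ 1) < ⊤ :=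
    lt_of_le_of_lt (ENNReal.le_tsum 1) (lt_of_le_of_ne le_top hsum)
  have h1 : ∫⁻ y, (g y : ℝ≥0∞) ∂(convPow ν₂ 1) < ⊤ := by
    rw [lintegral_smul_measure] at hterm
    simpa using hterm
  have : ∫⁻ y, (g y : ℝ≥0∞) ∂(convPow ν₂ 1) = ∫⁻ y, (g y : ℝ≥0∞) ∂ν₂ := by
    show ∫⁻ y, (g y : ℝ≥0∞) ∂(mconv ν₂ (Measure.dirac 0)) = _
    rw [lintegral_mconv _ _ _ hg']
    have hd : ∀ x : H, ∫⁻ y, (g (x + y) : ℝ≥0∞) ∂(Measure.dirac 0) = (g x : ℝ≥0∞) := by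
      intro x
      have hm : Measurable fun y => (g (x + y) : ℝ≥0∞) := hg'.comp (measurable_const_add x)
      rw [lintegral_dirac' _ hm, add_zero]
    simp only [hd]
  rwa [this] at h1

end
end

section
/- For j = 1, …, d let H_j be a separable real Hilbert space, ν_j a finite Borel measure on H_j with λ_j := ν_j(H_j), and let N_1, …, N_d be independent H_j-valued random variables such that the law of N_j equals the compound Poisson distribution e^{−θ_j·λ_j}·Σ_{n=0}^∞ (θ_jⁿ/n!)·ν_j^{*n} for a given θ = (θ_1, …, θ_d) ∈ ℝ_+^d. Let H := H_1 × ⋯ × H_d with inner product ⟨u, v⟩ = Σ_j ⟨u_j, v_j⟩, and let g : H → ℝ_+ be measurable and subadditive (g(x + y) ≤ g(x) + g(y)) with g(0) = 0. Then E[g(N_1, …, N_d)] ≤ |θ|·√d·Σ_{j=1}^d ∫_{H_j} g(η_j(x)) ν_j(dx), where |θ| is the Euclidean norm of θ and η_j : H_j → H is the canonical embedding (all other coordinates zero). -/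
open MeasureTheory ProbabilityTheory Filter Set
open scoped RealInnerProductSpace ENNReal NNReal

noncomputable section

section Aux

variable {G : Type*} [MeasurableSpace G] [AddCommMonoid G] [MeasurableAdd₂ G]

lemma aux_isFiniteMeasure_mconv (μ ν : Measure G) [IsFiniteMeasure μ] [IsFiniteMeasure ν] :
    IsFiniteMeasure (mconv μ ν) := by
  constructor
  rw [mconv, Measure.map_apply measurable_add MeasurableSet.univ, Set.preimage_univ]
  exact measure_lt_top _ _

lemma aux_isFiniteMeasure_convPow (ν : Measure G) [IsFiniteMeasure ν] (n : ℕ) :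
    IsFiniteMeasure (convPow ν n) := by
  induction n with
  | zero => show IsFiniteMeasure (Measure.dirac (0 : G)); infer_instance
  | succ n ih => exact @aux_isFiniteMeasure_mconv _ _ _ _ ν (convPow ν n) _ ih

lemma aux_mconv_univ (μ ν : Measure G) [SFinite μ] [SFinite ν] :
    mconv μ ν Set.univ = μ Set.univ * ν Set.univ := by
  rw [mconv, Measure.map_apply measurable_add MeasurableSet.univ, Set.preimage_univ,
    ← Set.univ_prod_univ, Measure.prod_prod]

lemma aux_convPow_univ (ν : Measure G) [IsFiniteMeasure ν] (n : ℕ) :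
    convPow ν n Set.univ = (ν Set.univ) ^ n := by
  induction n with
  | zero => simp [convPow]
  | succ n ih =>
    haveI := aux_isFiniteMeasure_convPow ν n
    rw [convPow, aux_mconv_univ, ih, pow_succ, mul_comm]

lemma aux_lintegral_mconv (μ ν : Measure G) [SFinite ν] {F : G → ℝ≥0∞} (hF : Measurable F) :
    ∫⁻ z, F z ∂(mconv μ ν) = ∫⁻ x, ∫⁻ y, F (x + y) ∂ν ∂μ := by
  rw [mconv, lintegral_map hF measurable_add]
  exact lintegral_prod _ (hF.comp measurable_add).aemeasurable

lemma aux_lintegral_convPow_succ_le (ν : Measure G) [IsFiniteMeasure ν]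
    {F : G → ℝ≥0∞} (hF : Measurable F) (hF0 : F 0 = 0)
    (hFsub : ∀ x y, F (x + y) ≤ F x + F y) (n : ℕ) :
    ∫⁻ z, F z ∂(convPow ν (n + 1))
      ≤ (n + 1 : ℕ) * (ν Set.univ) ^ n * ∫⁻ x, F x ∂ν := by
  induction n with
  | zero =>
    haveI : IsFiniteMeasure (convPow ν 0) := aux_isFiniteMeasure_convPow ν 0
    rw [show convPow ν 1 = mconv ν (convPow ν 0) from rfl, aux_lintegral_mconv _ _ hF]
    have h1 : ∀ x : G, ∫⁻ y, F (x + y) ∂(convPow ν 0) = F x := by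
      intro x
      rw [show convPow ν 0 = Measure.dirac 0 from rfl,
        lintegral_dirac' (0 : G) (f := fun y => F (x + y)) (hF.comp (measurable_const_add x)),
        add_zero]
    simp [h1]
  | succ n ih =>
    haveI := aux_isFiniteMeasure_convPow ν (n + 1)
    set μ := convPow ν (n + 1) with hμ
    set L := ν Set.univ with hLdef
    set A := ∫⁻ x, F x ∂ν with hA
    have hstep : ∫⁻ z, F z ∂(convPow ν (n + 2)) ≤ μ Set.univ * A + L * ∫⁻ z, F z ∂μ := by
      rw [show convPow ν (n + 2) = mconv ν μ from rfl, aux_lintegral_mconv _ _ hF]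
      calc ∫⁻ x, ∫⁻ y, F (x + y) ∂μ ∂ν
          ≤ ∫⁻ x, ∫⁻ y, (F x + F y) ∂μ ∂ν :=
            lintegral_mono fun x => lintegral_mono fun y => hFsub x y
        _ = ∫⁻ x, (F x * μ Set.univ + ∫⁻ z, F z ∂μ) ∂ν :=
            lintegral_congr fun x => by
              rw [lintegral_add_left measurable_const, lintegral_const]
        _ = μ Set.univ * A + L * ∫⁻ z, F z ∂μ := by
            rw [lintegral_add_right _ measurable_const, lintegral_const,
              lintegral_mul_const _ hF, ← hA, ← hLdef]
            ring
    calc ∫⁻ z, F z ∂(convPow ν (n + 2)) ≤ μ Set.univ * A + L * ∫⁻ z, F z ∂μ := hstep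
      _ ≤ L ^ (n + 1) * A + L * ((n + 1 : ℕ) * L ^ n * A) := by
          rw [hμ, aux_convPow_univ, ← hLdef]
          exact add_le_add le_rfl (mul_le_mul_right ih L)
      _ = (n + 1 + 1 : ℕ) * L ^ (n + 1) * A := by push_cast; ring

set_option maxHeartbeats 1000000 in
lemma aux_lintegral_cpoisson_le (ν : Measure G) [IsFiniteMeasure ν] {t : ℝ} (ht : 0 ≤ t)
    {F : G → ℝ≥0∞} (hF : Measurable F) (hF0 : F 0 = 0)
    (hFsub : ∀ x y, F (x + y) ≤ F x + F y) :
    ∫⁻ z, F z ∂(cpoisson ν t) ≤ ENNReal.ofReal t * ∫⁻ x, F x ∂ν := by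
  set A := ∫⁻ x, F x ∂ν with hA
  set r := (ν Set.univ).toReal with hr
  have hr0 : 0 ≤ r := ENNReal.toReal_nonneg
  have hL : ν Set.univ = ENNReal.ofReal r := (ENNReal.ofReal_toReal (measure_ne_top ν _)).symm
  set a : ℕ → ℝ≥0∞ := fun n => ENNReal.ofReal (t ^ n / n.factorial) with ha
  set I : ℕ → ℝ≥0∞ := fun n => ∫⁻ z, F z ∂(convPow ν n) with hI
  have hI0 : I 0 = 0 := by
    rw [hI]
    simp only [show convPow ν 0 = Measure.dirac (0 : G) from rfl]
    rw [lintegral_dirac' (0 : G) hF, hF0]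
  have hsplit : ∫⁻ z, F z ∂(cpoisson ν t)
      = ENNReal.ofReal (Real.exp (-(t * r))) * ∑' n : ℕ, a n * I n := by
    rw [cpoisson, lintegral_smul_measure, lintegral_sum_measure, ← hr]
    congr 1
    exact tsum_congr fun n => lintegral_smul_measure _ _
  have htail : (∑' n : ℕ, a n * I n) = ∑' n : ℕ, a (n + 1) * I (n + 1) := by
    rw [tsum_eq_zero_add' ENNReal.summable, hI0, mul_zero, zero_add]
  have hterm : ∀ n : ℕ, a (n + 1) * I (n + 1)
      ≤ ENNReal.ofReal t * (ENNReal.ofReal ((t * r) ^ n / n.factorial) * A) := by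
    intro n
    have h1 : I (n + 1) ≤ (n + 1 : ℕ) * (ν Set.univ) ^ n * A :=
      aux_lintegral_convPow_succ_le ν hF hF0 hFsub n
    calc a (n + 1) * I (n + 1) ≤ a (n + 1) * ((n + 1 : ℕ) * (ν Set.univ) ^ n * A) :=
          mul_le_mul_right h1 _
      _ = (a (n + 1) * (n + 1 : ℕ) * (ν Set.univ) ^ n) * A := by ring
      _ = ENNReal.ofReal t * (ENNReal.ofReal ((t * r) ^ n / n.factorial) * A) := by
          rw [hL, ← ENNReal.ofReal_pow hr0, ha]
          simp only [← ENNReal.ofReal_natCast (n + 1)]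
          rw [← ENNReal.ofReal_mul (by positivity), ← ENNReal.ofReal_mul (by positivity)]
          have hkey : t ^ (n + 1) / ((n + 1).factorial : ℝ) * (((n + 1 : ℕ) : ℝ)) * r ^ n
              = t * ((t * r) ^ n / (n.factorial : ℝ)) := by
            have hfac : (((n + 1).factorial : ℕ) : ℝ) = ((n + 1 : ℕ) : ℝ) * (n.factorial : ℝ) := by
              push_cast [Nat.factorial_succ]; ring
            have hnfac : (n.factorial : ℝ) ≠ 0 := Nat.cast_ne_zero.mpr n.factorial_ne_zero
            have hn1 : ((n + 1 : ℕ) : ℝ) ≠ 0 := by positivity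
            field_simp [hfac]
            rw [hfac]
            ring
          rw [hkey, ENNReal.ofReal_mul ht, mul_assoc]
  have hsum : (∑' n : ℕ, ENNReal.ofReal ((t * r) ^ n / n.factorial))
      = ENNReal.ofReal (Real.exp (t * r)) := by
    rw [← ENNReal.ofReal_tsum_of_nonneg (fun n => by positivity)
      (Real.summable_pow_div_factorial (t * r))]
    congr 1
    rw [Real.exp_eq_exp_ℝ, NormedSpace.exp_eq_tsum_div]
  calc ∫⁻ z, F z ∂(cpoisson ν t)
      = ENNReal.ofReal (Real.exp (-(t * r))) * ∑' n : ℕ, a (n + 1) * I (n + 1) := by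
        rw [hsplit, htail]
    _ ≤ ENNReal.ofReal (Real.exp (-(t * r))) *
          ∑' n : ℕ, ENNReal.ofReal t * (ENNReal.ofReal ((t * r) ^ n / n.factorial) * A) :=
        mul_le_mul_right (ENNReal.tsum_le_tsum hterm) _
    _ = ENNReal.ofReal (Real.exp (-(t * r))) * (ENNReal.ofReal t *
          ((∑' n : ℕ, ENNReal.ofReal ((t * r) ^ n / n.factorial)) * A)) := by
        rw [ENNReal.tsum_mul_left, ENNReal.tsum_mul_right]
    _ = (ENNReal.ofReal (Real.exp (-(t * r))) * ENNReal.ofReal (Real.exp (t * r))) *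
          (ENNReal.ofReal t * A) := by rw [hsum]; ring
    _ = ENNReal.ofReal t * A := by
        rw [← ENNReal.ofReal_mul (Real.exp_nonneg _), ← Real.exp_add, neg_add_cancel,
          Real.exp_zero, ENNReal.ofReal_one, one_mul]

end Aux

/-- If `N_1, …, N_d` are independent compound Poisson distributed random
variables with jump measures `ν_j` at times `θ_j ≥ 0`, and `g ≥ 0` is subadditive with
`g(0) = 0`, then `E[g(N_1, …, N_d)] ≤ |θ|·√d·Σ_j ∫ g(η_j(x)) ν_j(dx)`. -/
theorem compound_poisson_subadditive_moment_bound
    {d : ℕ} {H : Fin d → Type*} [∀ j, NormedAddCommGroup (H j)]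
    [∀ j, InnerProductSpace ℝ (H j)] [∀ j, CompleteSpace (H j)]
    [∀ j, SecondCountableTopology (H j)]
    [∀ j, MeasurableSpace (H j)] [∀ j, BorelSpace (H j)]
    [MeasurableSpace (PiLp 2 H)] [BorelSpace (PiLp 2 H)]
    {Ω : Type*} [MeasurableSpace Ω] (P : Measure Ω) [IsProbabilityMeasure P]
    (ν : ∀ j, Measure (H j)) [∀ j, IsFiniteMeasure (ν j)]
    (θ : Fin d → ℝ) (hθ : ∀ j, 0 ≤ θ j)
    (N : ∀ j, Ω → H j) (hNmeas : ∀ j, Measurable (N j))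
    (hNindep : iIndepFun N P)
    (hNlaw : ∀ j, Measure.map (N j) P = cpoisson (ν j) (θ j))
    (g : PiLp 2 H → ℝ≥0) (hg : Measurable g)
    (hgsub : ∀ x y : PiLp 2 H, g (x + y) ≤ g x + g y)
    (hg0 : g 0 = 0) :
    ∫⁻ ω, (g ((WithLp.equiv 2 (∀ j, H j)).symm fun j => N j ω) : ℝ≥0∞) ∂P
      ≤ ENNReal.ofReal (Real.sqrt (∑ j, θ j ^ 2) * Real.sqrt d) *
          ∑ j, ∫⁻ x, (g ((WithLp.equiv 2 (∀ j, H j)).symm (Pi.single j x)) : ℝ≥0∞) ∂(ν j) := by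
  classical
  set F : ∀ j, H j → ℝ≥0∞ :=
    fun j x => (g ((WithLp.equiv 2 (∀ j, H j)).symm (Pi.single j x)) : ℝ≥0∞) with hFdef
  have hsinglecont : ∀ j, Continuous fun x : H j =>
      (WithLp.equiv 2 (∀ j, H j)).symm (Pi.single j x) := by
    intro j
    exact (PiLp.continuous_toLp (p := 2) (β := H)).comp (continuous_single j)
  have hFmeas : ∀ j, Measurable (F j) := fun j =>
    measurable_coe_nnreal_ennreal_iff.mpr (hg.comp (hsinglecont j).measurable)
  have hF0 : ∀ j, F j 0 = 0 := by
    intro j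
    simp only [hFdef, Pi.single_zero, WithLp.equiv_symm_apply, WithLp.toLp_zero, hg0, ENNReal.coe_zero]
  have hFsub : ∀ j, ∀ x y : H j, F j (x + y) ≤ F j x + F j y := by
    intro j x y
    simp only [hFdef, Pi.single_add, WithLp.equiv_symm_apply, WithLp.toLp_add]
    rw [← ENNReal.coe_add]
    exact ENNReal.coe_le_coe.mpr (hgsub _ _)
  have hdecomp : ∀ f : ∀ j, H j, (WithLp.equiv 2 (∀ j, H j)).symm f
      = ∑ j, (WithLp.equiv 2 (∀ j, H j)).symm (Pi.single j (f j)) := by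
    intro f
    conv_lhs => rw [← Finset.univ_sum_single f]
    have := map_sum (WithLp.linearEquiv 2 ℝ (∀ j, H j)).symm
      (fun i : Fin d => Pi.single i (f i)) Finset.univ
    exact this
  have step1 : ∀ ω, (g ((WithLp.equiv 2 (∀ j, H j)).symm fun j => N j ω) : ℝ≥0∞)
      ≤ ∑ j, F j (N j ω) := by
    intro ω
    rw [hdecomp]
    calc (g (∑ j, (WithLp.equiv 2 (∀ j, H j)).symm (Pi.single j (N j ω))) : ℝ≥0∞)
        ≤ ((∑ j, g ((WithLp.equiv 2 (∀ j, H j)).symm (Pi.single j (N j ω))) : ℝ≥0) : ℝ≥0∞) :=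
          ENNReal.coe_le_coe.mpr (Finset.le_sum_of_subadditive g hg0.le hgsub _ _)
      _ = ∑ j, F j (N j ω) := by rw [ENNReal.coe_finset_sum]
  have hθle : ∀ j : Fin d, θ j ≤ Real.sqrt (∑ i, θ i ^ 2) * Real.sqrt d := by
    intro j
    have h1 : θ j ≤ Real.sqrt (∑ i, θ i ^ 2) := by
      rw [show θ j = Real.sqrt ((θ j) ^ 2) from (Real.sqrt_sq (hθ j)).symm]
      exact Real.sqrt_le_sqrt (Finset.single_le_sum (fun i _ => sq_nonneg (θ i))
        (Finset.mem_univ j))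
    have h2 : (1 : ℝ) ≤ Real.sqrt d := by
      rw [show (1 : ℝ) = Real.sqrt 1 from Real.sqrt_one.symm]
      exact Real.sqrt_le_sqrt (Nat.one_le_cast.mpr j.pos)
    calc θ j ≤ Real.sqrt (∑ i, θ i ^ 2) := h1
      _ = Real.sqrt (∑ i, θ i ^ 2) * 1 := (mul_one _).symm
      _ ≤ Real.sqrt (∑ i, θ i ^ 2) * Real.sqrt d :=
          mul_le_mul_of_nonneg_left h2 (Real.sqrt_nonneg _)
  calc ∫⁻ ω, (g ((WithLp.equiv 2 (∀ j, H j)).symm fun j => N j ω) : ℝ≥0∞) ∂P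
      ≤ ∫⁻ ω, ∑ j, F j (N j ω) ∂P := lintegral_mono step1
    _ = ∑ j, ∫⁻ ω, F j (N j ω) ∂P :=
        lintegral_finset_sum _ fun j _ => (hFmeas j).comp (hNmeas j)
    _ = ∑ j, ∫⁻ x, F j x ∂(cpoisson (ν j) (θ j)) := by
        refine Finset.sum_congr rfl fun j _ => ?_
        rw [← hNlaw j, lintegral_map (hFmeas j) (hNmeas j)]
    _ ≤ ∑ j, ENNReal.ofReal (θ j) * ∫⁻ x, F j x ∂(ν j) :=
        Finset.sum_le_sum fun j _ =>
          aux_lintegral_cpoisson_le (ν j) (hθ j) (hFmeas j) (hF0 j) (hFsub j)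
    _ ≤ ∑ j, ENNReal.ofReal (Real.sqrt (∑ i, θ i ^ 2) * Real.sqrt d) * ∫⁻ x, F j x ∂(ν j) :=
        Finset.sum_le_sum fun j _ =>
          mul_le_mul_left (ENNReal.ofReal_le_ofReal (hθle j)) _
    _ = ENNReal.ofReal (Real.sqrt (∑ j, θ j ^ 2) * Real.sqrt d) *
          ∑ j, ∫⁻ x, (g ((WithLp.equiv 2 (∀ j, H j)).symm (Pi.single j x)) : ℝ≥0∞) ∂(ν j) := by
        rw [Finset.mul_sum]

end
end
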